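/- arXiv:math/0609345 — 2 statements merged into one kernel-verified Lean document; each statement's English description precedes it below -/
import Mathlib

section
/- Let R be a commutative ring, and let f : M → N be a morphism of finitely generated projective R[t]-modules of the same constant rank n. If the induced map M/tM → N/tN (reduction modulo the ideal (t)) is an isomorphism, then f is injective. -/
open Polynomial

/-- `1 + X * c` is a non-zerodivisor in `R[X]`. -/
lemma aux_one_add_X_mul_regular {R : Type} [CommRing R] (c s : R[X])
    (h : (1 + Polynomial.X * c) * s = 0) : s = 0 := by
  by_contra hs
  have hnt : Nontrivial R[X] := nontrivial_of_ne s 0 hs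
  have hntR : Nontrivial R := by
    rcases subsingleton_or_nontrivial R with h' | h'
    · exact absurd (Subsingleton.elim s 0) hs
    · exact h'
  have h1 : s = (-(Polynomial.X * c)) * s := by linear_combination h
  have key : ∀ k : ℕ, s = (-(Polynomial.X * c)) ^ k * s := by
    intro k
    induction k with
    | zero => simp
    | succ k ih =>
      calc s = (-(Polynomial.X * c)) ^ k * s := ih
      _ = (-(Polynomial.X * c)) ^ k * ((-(Polynomial.X * c)) * s) := by rw [← h1]
      _ = (-(Polynomial.X * c)) ^ (k + 1) * s := by ring
  have hdvd : ∀ k : ℕ, (Polynomial.X : R[X]) ^ k ∣ s := by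
    intro k
    refine ⟨(-c) ^ k * s, ?_⟩
    calc s = (-(Polynomial.X * c)) ^ k * s := key k
    _ = Polynomial.X ^ k * ((-c) ^ k * s) := by ring
  obtain ⟨u, hu⟩ := hdvd (s.natDegree + 1)
  have hu0 : u ≠ 0 := by rintro rfl; simp at hu; exact hs hu
  have hdeg : s.natDegree = (s.natDegree + 1) + u.natDegree := by
    conv_lhs => rw [hu]
    rw [Polynomial.Monic.natDegree_mul' (Polynomial.monic_X_pow _) hu0,
      Polynomial.natDegree_X_pow]
  omega

/-- Let `R` be a commutative ring and `f : M → N` a morphism of finitely generated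
projective `R[t]`-modules of the same constant rank `n` (all localizations at primes
are free of rank `n`).  If the induced map `M/tM → N/tN` is an isomorphism, then `f`
is injective. -/
theorem injective_of_bijective_mod_X
    (R M N : Type) [CommRing R] [AddCommGroup M] [AddCommGroup N]
    [Module (Polynomial R) M] [Module (Polynomial R) N]
    [Module.Finite (Polynomial R) M] [Module.Finite (Polynomial R) N]
    [Module.Projective (Polynomial R) M] [Module.Projective (Polynomial R) N]
    (n : ℕ)
    (hrkM : ∀ p : PrimeSpectrum (Polynomial R),
      Module.finrank (Localization.AtPrime p.asIdeal)
        (LocalizedModule p.asIdeal.primeCompl M) = n)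
    (hrkN : ∀ p : PrimeSpectrum (Polynomial R),
      Module.finrank (Localization.AtPrime p.asIdeal)
        (LocalizedModule p.asIdeal.primeCompl N) = n)
    (f : M →ₗ[Polynomial R] N)
    (hle : (Ideal.span {Polynomial.X} : Ideal (Polynomial R)) • (⊤ : Submodule (Polynomial R) M) ≤
      Submodule.comap f ((Ideal.span {Polynomial.X} : Ideal (Polynomial R)) •
        (⊤ : Submodule (Polynomial R) N)))
    (hbij : Function.Bijective
      (Submodule.mapQ
        ((Ideal.span {Polynomial.X} : Ideal (Polynomial R)) • (⊤ : Submodule (Polynomial R) M))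
        ((Ideal.span {Polynomial.X} : Ideal (Polynomial R)) • (⊤ : Submodule (Polynomial R) N))
        f hle)) :
    Function.Injective f := by
  set A := Polynomial R with hA
  set I : Ideal A := Ideal.span {Polynomial.X} with hIdef
  set IM : Submodule A M := I • ⊤ with hIM
  set IN : Submodule A N := I • ⊤ with hIN
  set φ : (M ⧸ IM) →ₗ[A] (N ⧸ IN) := Submodule.mapQ IM IN f hle with hφ
  let e : (M ⧸ IM) ≃ₗ[A] (N ⧸ IN) := LinearEquiv.ofBijective φ hbij
  -- lift `e.symm ∘ mkQ : N → M ⧸ IM` along `mkQ : M → M ⧸ IM`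
  obtain ⟨g, hg⟩ := Module.projective_lifting_property IM.mkQ
    (e.symm.toLinearMap.comp IN.mkQ) (Submodule.mkQ_surjective IM)
  set h : M →ₗ[A] M := g.comp f with hh
  have hmod : ∀ m : M, h m - m ∈ IM := by
    intro m
    have h2 : IN.mkQ (f m) = φ (IM.mkQ m) := by
      simp [hφ, Submodule.mkQ_apply, Submodule.mapQ_apply]
    have h1 : IM.mkQ (h m) = IM.mkQ m := by
      have := congrArg (fun (t : N →ₗ[A] M ⧸ IM) => t (f m)) hg
      simp only [LinearMap.comp_apply, LinearEquiv.coe_coe] at this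
      rw [hh, LinearMap.comp_apply, this, h2]
      exact e.symm_apply_apply _
    rwa [Submodule.mkQ_apply, Submodule.mkQ_apply, Submodule.Quotient.eq] at h1
  -- split M off a finite free module
  obtain ⟨m, π, hπ⟩ := Module.Finite.exists_fin' A M
  obtain ⟨σ, hσ⟩ := Module.projective_lifting_property π (LinearMap.id (R := A) (M := M)) hπ
  have hσ' : ∀ x : M, π (σ x) = x := fun x => congrArg (fun t => t x) (congrArg DFunLike.coe hσ)
  -- the endomorphism U of A^m
  set U : (Fin m → A) →ₗ[A] (Fin m → A) :=
    (σ.comp (h.comp π)) + (LinearMap.id - σ.comp π) with hU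
  have hUmod : ∀ v : Fin m → A, U v - v ∈ (I • ⊤ : Submodule A (Fin m → A)) := by
    intro v
    have h1 : U v - v = σ (h (π v) - π v) := by
      simp [hU, map_sub]
      abel
    rw [h1]
    have h2 : σ (h (π v) - π v) ∈ (IM.map σ) := Submodule.mem_map_of_mem (hmod (π v))
    have h3 : IM.map σ ≤ I • ⊤ := by
      rw [hIM, Submodule.map_smul'']
      exact Submodule.smul_mono le_rfl le_top
    exact h3 h2
  -- coordinates of I • ⊤ lie in I
  have hcoord : ∀ (v : Fin m → A), v ∈ (I • ⊤ : Submodule A (Fin m → A)) → ∀ i, v i ∈ I := by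
    intro v hv i
    refine Submodule.smul_induction_on hv ?_ ?_
    · intro a ha x _
      exact Ideal.mul_mem_right _ _ ha
    · intro x y hx hy
      exact Ideal.add_mem _ hx hy
  -- matrix of U
  set Mat : Matrix (Fin m) (Fin m) A := LinearMap.toMatrix' U with hMat
  have hUv : ∀ v, U v = Mat.mulVec v := by
    intro v
    rw [hMat, ← Matrix.toLin'_apply, Matrix.toLin'_toMatrix']
  -- entries of Mat ≡ identity mod I
  have hMatmod : ∀ i j, Mat i j - (1 : Matrix (Fin m) (Fin m) A) i j ∈ I := by
    intro i j
    have h1 : Mat i j = U (fun j' => if j' = j then 1 else 0) i :=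
      (LinearMap.toMatrix'_apply U i j).trans (by rw [show (Pi.single j 1 : Fin m → A) = fun j' => if j' = j then 1 else 0 from by funext j'; simp [Pi.single_apply]])
    have h2 : (1 : Matrix (Fin m) (Fin m) A) i j = (fun j' => if j' = j then 1 else 0) i := by
      simp [Matrix.one_apply]
    rw [h1, h2]
    exact hcoord _ (hUmod _) i
  -- determinant ≡ 1 mod I
  have hdet : Mat.det - 1 ∈ I := by
    have hmap : Mat.map (Ideal.Quotient.mk I) = (1 : Matrix (Fin m) (Fin m) (A ⧸ I)) := by
      ext i j
      have := hMatmod i j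
      rw [Matrix.map_apply]
      have h1 : Ideal.Quotient.mk I (Mat i j) = Ideal.Quotient.mk I ((1 : Matrix (Fin m) (Fin m) A) i j) :=
        Ideal.Quotient.mk_eq_mk_iff_sub_mem _ _ |>.mpr this
      rw [h1, Matrix.one_apply, Matrix.one_apply]
      split <;> simp
    have h2 : Ideal.Quotient.mk I Mat.det = 1 := by
      rw [RingHom.map_det, RingHom.mapMatrix_apply, hmap, Matrix.det_one]
    rw [← Ideal.Quotient.mk_eq_mk_iff_sub_mem]
    rw [h2, map_one]
  obtain ⟨c, hc⟩ := Ideal.mem_span_singleton'.mp (hIdef ▸ hdet)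
  have hdeteq : Mat.det = 1 + Polynomial.X * c := by
    linear_combination -hc
  -- det is a non-zerodivisor, hence U injective
  have hUinj : Function.Injective U := by
    intro v w hvw
    have h0 : U (v - w) = 0 := by rw [map_sub, hvw, sub_self]
    rw [hUv] at h0
    have h1 : Mat.det • (v - w) = 0 := by
      have h2 := congrArg (Matrix.mulVec (Matrix.adjugate Mat)) h0
      rwa [Matrix.mulVec_mulVec, Matrix.adjugate_mul, Matrix.smul_mulVec,
        Matrix.one_mulVec, Matrix.mulVec_zero] at h2
    have h2 : v - w = 0 := by
      funext i
      have := congrArg (fun t => t i) h1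
      simp only [Pi.smul_apply, smul_eq_mul, Pi.zero_apply] at this
      rw [hdeteq] at this
      exact aux_one_add_X_mul_regular c _ this
    exact sub_eq_zero.mp h2
  -- conclude
  rw [← LinearMap.ker_eq_bot]
  rw [LinearMap.ker_eq_bot']
  intro x hx
  have hhx : h x = 0 := by rw [hh, LinearMap.comp_apply, hx, map_zero]
  have hUσ : U (σ x) = 0 := by
    simp only [hU, LinearMap.add_apply, LinearMap.sub_apply, LinearMap.comp_apply,
      LinearMap.id_apply, hσ' x, hhx, map_zero]
    abel
  have : σ x = 0 := hUinj (by rw [hUσ, map_zero])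
  rw [← hσ' x, this, map_zero]
end

section
/- Let J₁ ⊇ ... ⊇ Jₙ and J̄₁ ⊇ ... ⊇ J̄ₙ be chains of nonzero ideals of F_q[t] such that the products J₁⋯Jₙ and J̄₁⋯J̄ₙ are coprime. For a lattice N ⊆ F_q(t)^{⊕n} (a finitely generated F_q[t]-submodule of rank n), the number of sublattices N'' ⊆ N with N/N'' ≅ ⊕ᵢ F_q[t]/(Jᵢ·J̄ᵢ) equals the sum over sublattices N' ⊆ N with N/N' ≅ ⊕ᵢ F_q[t]/Jᵢ of the number of sublattices N'' ⊆ N' with N'/N'' ≅ ⊕ᵢ F_q[t]/J̄ᵢ; i.e., the Hecke operators satisfy T(J₁,...,Jₙ)·T(J̄₁,...,J̄ₙ) = T(J₁J̄₁,...,JₙJ̄ₙ) when the supports are disjoint. -/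
open Polynomial

section Aux

variable {R : Type*} [CommRing R]

section Modules

variable {M M₂ : Type*} [AddCommGroup M] [Module R M] [AddCommGroup M₂] [Module R M₂]

theorem map_equiv_smulTop (e : M ≃ₗ[R] M₂) (c : Ideal R) :
    Submodule.map (e : M →ₗ[R] M₂) (c • (⊤ : Submodule R M)) = c • (⊤ : Submodule R M₂) := by
  have h0 : Submodule.map (e : M →ₗ[R] M₂) (c • (⊤ : Submodule R M)) =
      Submodule.map e.toLinearMap (c • (⊤ : Submodule R M)) := rfl
  rw [h0, Submodule.map_smul'', Submodule.map_top]
  have h1 : LinearMap.range e.toLinearMap = ⊤ :=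
    LinearMap.range_eq_top.2 e.surjective
  rw [h1]

theorem smulTop_eq_bot_of_equiv (e : M ≃ₗ[R] M₂) {c : Ideal R}
    (h : c • (⊤ : Submodule R M₂) = ⊥) : c • (⊤ : Submodule R M) = ⊥ := by
  have h1 := map_equiv_smulTop e c
  rw [h] at h1
  have h2 : c • (⊤ : Submodule R M) ≤ LinearMap.ker e.toLinearMap := by
    rw [← Submodule.comap_bot]
    exact Submodule.map_le_iff_le_comap.1 (le_of_eq h1)
  rw [LinearMap.ker_eq_bot.2 e.injective] at h2
  exact le_bot_iff.1 h2

/-- Transport the quotient by `c • ⊤` through a linear equivalence. -/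
noncomputable def quotSmulTopEquiv (e : M ≃ₗ[R] M₂) (c : Ideal R) :
    (M ⧸ c • (⊤ : Submodule R M)) ≃ₗ[R] (M₂ ⧸ c • (⊤ : Submodule R M₂)) :=
  Submodule.Quotient.equiv _ _ e (map_equiv_smulTop e c)

theorem core_eq {a b : Ideal R} (hab : a ⊔ b = ⊤) {M' : Submodule R M}
    (h1 : a • (⊤ : Submodule R M) ≤ M') (h2 : b • M' = ⊥) :
    M' = a • (⊤ : Submodule R M) := by
  obtain ⟨α, hα, β, hβ, hαβ⟩ := Submodule.mem_sup.1
    (show (1 : R) ∈ a ⊔ b by rw [hab]; trivial)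
  refine le_antisymm (fun x hx => ?_) h1
  have hx2 : β • x ∈ b • M' := Submodule.smul_mem_smul hβ hx
  rw [h2, Submodule.mem_bot] at hx2
  have hxx : x = α • x + β • x := by rw [← add_smul, hαβ, one_smul]
  rw [hxx, hx2, add_zero]
  exact Submodule.smul_mem_smul hα trivial

/-- CRT-type decomposition of a module killed by a product of coprime ideals. -/
noncomputable def coreProd {a b : Ideal R} {α β : R} (hα : α ∈ a) (hβ : β ∈ b)
    (hαβ : α + β = 1)
    (hann : (a * b) • (⊤ : Submodule R M) = ⊥) :
    M ≃ₗ[R] (M ⧸ a • (⊤ : Submodule R M)) × (M ⧸ b • (⊤ : Submodule R M)) := by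
  have hmul : (a * b) • (⊤ : Submodule R M) = a • b • (⊤ : Submodule R M) := by
    rw [← Ideal.smul_eq_mul, Submodule.smul_assoc]
  have hmul' : (a * b) • (⊤ : Submodule R M) = b • a • (⊤ : Submodule R M) := by
    rw [mul_comm, ← Ideal.smul_eq_mul, Submodule.smul_assoc]
  refine LinearEquiv.ofBijective
    (((a • (⊤ : Submodule R M)).mkQ).prod ((b • (⊤ : Submodule R M)).mkQ)) ⟨?_, ?_⟩
  · rw [← LinearMap.ker_eq_bot, LinearMap.ker_prod, Submodule.ker_mkQ, Submodule.ker_mkQ,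
      eq_bot_iff]
    intro x hx
    rw [Submodule.mem_inf] at hx
    have h1 : α • x ∈ (a * b) • (⊤ : Submodule R M) := by
      rw [hmul]; exact Submodule.smul_mem_smul hα hx.2
    have h2 : β • x ∈ (a * b) • (⊤ : Submodule R M) := by
      rw [hmul']; exact Submodule.smul_mem_smul hβ hx.1
    rw [hann, Submodule.mem_bot] at h1 h2
    have hxx : x = α • x + β • x := by rw [← add_smul, hαβ, one_smul]
    rw [Submodule.mem_bot, hxx, h1, h2, add_zero]
  · rintro ⟨u, v⟩
    obtain ⟨m, rfl⟩ := Submodule.mkQ_surjective _ u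
    obtain ⟨m', rfl⟩ := Submodule.mkQ_surjective _ v
    refine ⟨β • m + α • m', Prod.ext ?_ ?_⟩
    · show Submodule.Quotient.mk (β • m + α • m') = Submodule.Quotient.mk m
      rw [Submodule.Quotient.eq]
      have : β • m + α • m' - m = α • (m' - m) := by
        have hβ1 : β = 1 - α := by rw [← hαβ]; ring
        rw [hβ1]
        match_scalars <;> ring
      rw [this]
      exact Submodule.smul_mem_smul hα trivial
    · show Submodule.Quotient.mk (β • m + α • m') = Submodule.Quotient.mk m'
      rw [Submodule.Quotient.eq]
      have : β • m + α • m' - m' = β • (m - m') := by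
        have hβ1 : β = 1 - α := by rw [← hαβ]; ring
        rw [hβ1]
        match_scalars <;> ring
      rw [this]
      exact Submodule.smul_mem_smul hβ trivial

/-- In the situation of `core_eq`, the submodule `M'` is isomorphic to `M ⧸ b • ⊤`. -/
noncomputable def coreSub {a b : Ideal R} {α β : R} (hα : α ∈ a) (hβ : β ∈ b)
    (hαβ : α + β = 1) {M' : Submodule R M}
    (h1 : a • (⊤ : Submodule R M) ≤ M') (h2 : b • M' = ⊥) :
    M' ≃ₗ[R] (M ⧸ b • (⊤ : Submodule R M)) := by
  refine LinearEquiv.ofBijective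
    ((b • (⊤ : Submodule R M)).mkQ.comp M'.subtype) ⟨?_, ?_⟩
  · rw [← LinearMap.ker_eq_bot, eq_bot_iff]
    intro x hx
    rw [LinearMap.mem_ker, LinearMap.comp_apply, Submodule.subtype_apply, Submodule.mkQ_apply,
      Submodule.Quotient.mk_eq_zero] at hx
    have e1 : β • (x : M) ∈ b • M' := Submodule.smul_mem_smul hβ x.2
    have e2 : α • (x : M) ∈ a • b • (⊤ : Submodule R M) := Submodule.smul_mem_smul hα hx
    have hle : a • b • (⊤ : Submodule R M) ≤ b • M' := by
      rw [← Submodule.smul_assoc, Ideal.smul_eq_mul, mul_comm, ← Ideal.smul_eq_mul,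
        Submodule.smul_assoc]
      exact Submodule.smul_mono le_rfl h1
    have e2' := hle e2
    rw [h2, Submodule.mem_bot] at e1 e2'
    have hxx : (x : M) = α • (x : M) + β • (x : M) := by rw [← add_smul, hαβ, one_smul]
    have : (x : M) = 0 := by rw [hxx, e1, e2', add_zero]
    rw [Submodule.mem_bot]
    exact Subtype.ext this
  · intro y
    obtain ⟨m, rfl⟩ := Submodule.mkQ_surjective _ y
    refine ⟨⟨α • m, h1 (Submodule.smul_mem_smul hα trivial)⟩, ?_⟩
    show Submodule.Quotient.mk (α • m) = Submodule.Quotient.mk m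
    rw [Submodule.Quotient.eq]
    have : α • m - m = -(β • m) := by
      have hβ1 : β = 1 - α := by rw [← hαβ]; ring
      rw [hβ1]
      match_scalars <;> ring
    rw [this]
    exact neg_mem (Submodule.smul_mem_smul hβ trivial)

end Modules

theorem smulTop_pi_quot_eq_bot {ι : Type*} (K : ι → Ideal R) {c : Ideal R}
    (hc : ∀ i, c ≤ K i) : c • (⊤ : Submodule R (∀ i, R ⧸ K i)) = ⊥ := by
  rw [eq_bot_iff]
  refine Submodule.smul_le.2 fun r hr x _ => ?_
  rw [Submodule.mem_bot]
  funext i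
  obtain ⟨s, hs⟩ := Submodule.Quotient.mk_surjective (K i) (x i)
  rw [Pi.smul_apply, Pi.zero_apply, ← hs, ← Submodule.Quotient.mk_smul,
    Submodule.Quotient.mk_eq_zero]
  rw [smul_eq_mul]
  exact Ideal.mul_mem_right _ _ (hc i hr)

theorem smulTop_pi {ι : Type*} [Fintype ι] [DecidableEq ι] {Ms : ι → Type*}
    [∀ i, AddCommGroup (Ms i)] [∀ i, Module R (Ms i)] (c : Ideal R) :
    c • (⊤ : Submodule R (∀ i, Ms i)) =
      Submodule.pi Set.univ (fun i => c • (⊤ : Submodule R (Ms i))) := by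
  refine le_antisymm (Submodule.smul_le.2 fun r hr x _ => ?_) (fun x hx => ?_)
  · intro i _
    exact Submodule.smul_mem_smul hr trivial
  · rw [← Finset.univ_sum_single x]
    refine Submodule.sum_mem _ fun i _ => ?_
    have hxi : x i ∈ c • (⊤ : Submodule R (Ms i)) := hx i trivial
    refine Submodule.smul_induction_on hxi (fun r hr m _ => ?_) (fun y z hy hz => ?_)
    · rw [Pi.single_smul]
      exact Submodule.smul_mem_smul hr trivial
    · rw [Pi.single_add]
      exact Submodule.add_mem _ hy hz

/-- `(R ⧸ K) ⧸ c•⊤  ≃  R ⧸ (c ⊔ K)`. -/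
noncomputable def quotSmulTopQuotEquiv (c K : Ideal R) :
    ((R ⧸ K) ⧸ c • (⊤ : Submodule R (R ⧸ K))) ≃ₗ[R] R ⧸ (c ⊔ K) := by
  have h1 : Submodule.map K.mkQ K = ⊥ := by
    rw [eq_bot_iff, Submodule.map_le_iff_le_comap]
    intro x hx
    rw [Submodule.mem_comap, Submodule.mem_bot, Submodule.mkQ_apply,
      Submodule.Quotient.mk_eq_zero]
    exact hx
  have h2 : Submodule.map K.mkQ c = c • (⊤ : Submodule R (R ⧸ K)) := by
    calc Submodule.map K.mkQ c = Submodule.map K.mkQ (c • (⊤ : Submodule R R)) := by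
          rw [Ideal.smul_eq_mul, Ideal.mul_top]
      _ = c • Submodule.map K.mkQ (⊤ : Submodule R R) := Submodule.map_smul'' _ _ _
      _ = c • (⊤ : Submodule R (R ⧸ K)) := by rw [Submodule.map_top, Submodule.range_mkQ]
  have h : Submodule.map K.mkQ (c ⊔ K) = c • (⊤ : Submodule R (R ⧸ K)) := by
    rw [Submodule.map_sup, h1, h2, sup_bot_eq]
  exact (Submodule.quotEquivOfEq _ _ h.symm).trans
    (Submodule.quotientQuotientEquivQuotient K (c ⊔ K) le_sup_right)

/-- `(Π i, R ⧸ K i) ⧸ c•⊤  ≃  Π i, R ⧸ (c ⊔ K i)`. -/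
noncomputable def quotSmulTopPiEquiv {ι : Type*} [Fintype ι] [DecidableEq ι]
    (K : ι → Ideal R) (c : Ideal R) :
    ((∀ i, R ⧸ K i) ⧸ c • (⊤ : Submodule R (∀ i, R ⧸ K i))) ≃ₗ[R] ∀ i, R ⧸ (c ⊔ K i) :=
  (Submodule.quotEquivOfEq _ _ (smulTop_pi c)).trans
    ((Submodule.quotientPi _).trans
      (LinearEquiv.piCongrRight fun i => quotSmulTopQuotEquiv c (K i)))

theorem sup_mul_eq_left {a b c d : Ideal R} (hac : a ≤ c) (hbd : b ≤ d)
    (hab : a ⊔ b = ⊤) : a ⊔ c * d = c := by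
  refine le_antisymm (sup_le hac Ideal.mul_le_left) ?_
  calc c = c * (a ⊔ b) := by rw [hab, Ideal.mul_top]
    _ = c * a ⊔ c * b := Ideal.mul_sup _ _ _
    _ ≤ a ⊔ c * d := sup_le_sup Ideal.mul_le_right (Ideal.mul_mono_right hbd)

theorem sup_mul_eq_right {a b c d : Ideal R} (hac : a ≤ c) (hbd : b ≤ d)
    (hab : a ⊔ b = ⊤) : b ⊔ c * d = d := by
  rw [mul_comm]
  exact sup_mul_eq_left hbd hac (by rwa [sup_comm])

section PiEquivs

variable {ι : Type*} [Fintype ι] [DecidableEq ι] {K L : ι → Ideal R} {a b : Ideal R}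

/-- `P ⧸ a•⊤ ≃ Π R ⧸ K i` where `P = Π R ⧸ (K i * L i)`. -/
noncomputable def quotSmulTopPEquivLeft (haK : ∀ i, a ≤ K i) (hbL : ∀ i, b ≤ L i)
    (hab : a ⊔ b = ⊤) :
    ((∀ i, R ⧸ (K i * L i)) ⧸ a • (⊤ : Submodule R (∀ i, R ⧸ (K i * L i)))) ≃ₗ[R]
      ∀ i, R ⧸ K i :=
  (quotSmulTopPiEquiv _ a).trans
    (LinearEquiv.piCongrRight fun i =>
      Submodule.quotEquivOfEq _ _ (sup_mul_eq_left (haK i) (hbL i) hab))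

noncomputable def quotSmulTopPEquivRight (haK : ∀ i, a ≤ K i) (hbL : ∀ i, b ≤ L i)
    (hab : a ⊔ b = ⊤) :
    ((∀ i, R ⧸ (K i * L i)) ⧸ b • (⊤ : Submodule R (∀ i, R ⧸ (K i * L i)))) ≃ₗ[R]
      ∀ i, R ⧸ L i :=
  (quotSmulTopPiEquiv _ b).trans
    (LinearEquiv.piCongrRight fun i =>
      Submodule.quotEquivOfEq _ _ (sup_mul_eq_right (haK i) (hbL i) hab))

theorem hannP (haK : ∀ i, a ≤ K i) (hbL : ∀ i, b ≤ L i) :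
    (a * b) • (⊤ : Submodule R (∀ i, R ⧸ (K i * L i))) = ⊥ :=
  smulTop_pi_quot_eq_bot _ fun i => Ideal.mul_mono (haK i) (hbL i)

end PiEquivs

section Plumbing

variable {V : Type*} [AddCommGroup V] [Module R V]

/-- For `Y ≤ X ≤ A`, the quotient `X ⧸ Y` is isomorphic to the image of `X` in `A ⧸ Y`. -/
noncomputable def subQuotEquiv {A X Y : Submodule R V} (hXA : X ≤ A) (hYX : Y ≤ X) :
    (X ⧸ Y.comap X.subtype) ≃ₗ[R]
      ((X.comap A.subtype).map (Y.comap A.subtype).mkQ) := by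
  have hker : LinearMap.ker ((Y.comap A.subtype).mkQ.comp (Submodule.inclusion hXA)) =
      Y.comap X.subtype := by
    ext x
    rw [LinearMap.mem_ker, LinearMap.comp_apply, Submodule.mkQ_apply,
      Submodule.Quotient.mk_eq_zero, Submodule.mem_comap, Submodule.mem_comap]
    rfl
  have hrange : LinearMap.range ((Y.comap A.subtype).mkQ.comp (Submodule.inclusion hXA)) =
      (X.comap A.subtype).map (Y.comap A.subtype).mkQ := by
    rw [LinearMap.range_comp, Submodule.range_inclusion]
  exact (Submodule.quotEquivOfEq _ _ hker.symm).trans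
    ((((Y.comap A.subtype).mkQ.comp (Submodule.inclusion hXA)).quotKerEquivRange).trans
      (LinearEquiv.ofEq _ _ hrange))

theorem comap_sup_smul {A X : Submodule R V} (hXA : X ≤ A) (c : Ideal R) :
    (X ⊔ c • A).comap A.subtype = X.comap A.subtype ⊔ c • (⊤ : Submodule R A) := by
  have hmap : Submodule.map A.subtype (X.comap A.subtype ⊔ c • (⊤ : Submodule R A)) =
      X ⊔ c • A := by
    rw [Submodule.map_sup, Submodule.map_comap_subtype, inf_eq_right.2 hXA,
      Submodule.map_smul'', Submodule.map_top, Submodule.range_subtype]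
  rw [← hmap, Submodule.comap_map_eq, Submodule.ker_subtype, sup_bot_eq]

theorem smulTop_le_of_quot_equiv {A X : Submodule R V} {Y : Type*} [AddCommGroup Y]
    [Module R Y] (e : (A ⧸ X.comap A.subtype) ≃ₗ[R] Y) {c : Ideal R}
    (hY : c • (⊤ : Submodule R Y) = ⊥) :
    c • (⊤ : Submodule R A) ≤ X.comap A.subtype := by
  have hbot : c • (⊤ : Submodule R (A ⧸ X.comap A.subtype)) = ⊥ :=
    smulTop_eq_bot_of_equiv e hY
  have h : (c • (⊤ : Submodule R A)).map (X.comap A.subtype).mkQ ≤ ⊥ := by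
    rw [Submodule.map_smul'', Submodule.map_top, Submodule.range_mkQ, hbot]
  have h' := Submodule.map_le_iff_le_comap.1 h
  rwa [Submodule.comap_bot, Submodule.ker_mkQ] at h'

end Plumbing

section Hecke

variable {V : Type*} [AddCommGroup V] [Module R V]
variable {ι : Type*} [Fintype ι] [DecidableEq ι]
variable {K L : ι → Ideal R} {a b : Ideal R}

theorem hecke_fwd (haK : ∀ i, a ≤ K i) (hbL : ∀ i, b ≤ L i) (hab : a ⊔ b = ⊤)
    {N X : Submodule R V} (hXN : X ≤ N)
    (h : Nonempty ((N ⧸ X.comap N.subtype) ≃ₗ[R] ∀ i, R ⧸ (K i * L i))) :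
    X ⊔ a • N ≤ N ∧
      Nonempty ((N ⧸ (X ⊔ a • N).comap N.subtype) ≃ₗ[R] ∀ i, R ⧸ K i) ∧
      Nonempty ((↥(X ⊔ a • N) ⧸ X.comap (X ⊔ a • N).subtype) ≃ₗ[R] ∀ i, R ⧸ L i) := by
  obtain ⟨α, hα, β, hβ, hαβ⟩ := Submodule.mem_sup.1
    (show (1 : R) ∈ a ⊔ b by rw [hab]; trivial)
  obtain ⟨e⟩ := h
  set X₁ := X.comap N.subtype with hX₁
  have hannM : (a * b) • (⊤ : Submodule R (N ⧸ X₁)) = ⊥ :=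
    smulTop_eq_bot_of_equiv e (hannP haK hbL)
  have hYN : X ⊔ a • N ≤ N := sup_le hXN Submodule.smul_le_right
  have hcomap : (X ⊔ a • N).comap N.subtype = X₁ ⊔ a • (⊤ : Submodule R N) :=
    comap_sup_smul hXN a
  have hmap : (X₁ ⊔ a • (⊤ : Submodule R N)).map X₁.mkQ =
      a • (⊤ : Submodule R (N ⧸ X₁)) := by
    rw [Submodule.map_sup, Submodule.map_smul'', Submodule.map_top, Submodule.range_mkQ]
    have hbotX : X₁.map X₁.mkQ = ⊥ := by
      rw [eq_bot_iff, Submodule.map_le_iff_le_comap]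
      intro x hx
      rw [Submodule.mem_comap, Submodule.mem_bot, Submodule.mkQ_apply,
        Submodule.Quotient.mk_eq_zero]
      exact hx
    rw [hbotX, bot_sup_eq]
  have h2 : b • (a • (⊤ : Submodule R (N ⧸ X₁))) = ⊥ := by
    rw [← Submodule.smul_assoc, Ideal.smul_eq_mul, mul_comm, hannM]
  have hQa : ((N ⧸ X₁) ⧸ a • (⊤ : Submodule R (N ⧸ X₁))) ≃ₗ[R] ∀ i, R ⧸ K i :=
    (quotSmulTopEquiv e a).trans (quotSmulTopPEquivLeft haK hbL hab)
  have hQb : ((N ⧸ X₁) ⧸ b • (⊤ : Submodule R (N ⧸ X₁))) ≃ₗ[R] ∀ i, R ⧸ L i :=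
    (quotSmulTopEquiv e b).trans (quotSmulTopPEquivRight haK hbL hab)
  refine ⟨hYN, ⟨?_⟩, ⟨?_⟩⟩
  · exact (Submodule.quotEquivOfEq _ _ hcomap).trans
      (((Submodule.quotientQuotientEquivQuotient X₁ (X₁ ⊔ a • ⊤) le_sup_left).symm).trans
        ((Submodule.quotEquivOfEq _ _ hmap).trans hQa))
  · have heq : ((X ⊔ a • N).comap N.subtype).map X₁.mkQ =
        a • (⊤ : Submodule R (N ⧸ X₁)) := by rw [hcomap, hmap]
    exact (subQuotEquiv hYN le_sup_left).trans ((LinearEquiv.ofEq _ _ heq).trans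
      ((coreSub hα hβ hαβ le_rfl h2).trans hQb))

theorem hecke_bwd (haK : ∀ i, a ≤ K i) (hbL : ∀ i, b ≤ L i) (hab : a ⊔ b = ⊤)
    {N Y X : Submodule R V} (hYN : Y ≤ N) (hXY : X ≤ Y)
    (hYiso : Nonempty ((N ⧸ Y.comap N.subtype) ≃ₗ[R] ∀ i, R ⧸ K i))
    (hXiso : Nonempty ((Y ⧸ X.comap Y.subtype) ≃ₗ[R] ∀ i, R ⧸ L i)) :
    Y = X ⊔ a • N ∧
      Nonempty ((N ⧸ X.comap N.subtype) ≃ₗ[R] ∀ i, R ⧸ (K i * L i)) := by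
  obtain ⟨α, hα, β, hβ, hαβ⟩ := Submodule.mem_sup.1
    (show (1 : R) ∈ a ⊔ b by rw [hab]; trivial)
  obtain ⟨e1⟩ := hYiso
  obtain ⟨e0⟩ := hXiso
  have hXN : X ≤ N := hXY.trans hYN
  set X₁ := X.comap N.subtype with hX₁def
  set Y₁ := Y.comap N.subtype with hY₁def
  have hXY₁ : X₁ ≤ Y₁ := Submodule.comap_mono hXY
  set M' : Submodule R (N ⧸ X₁) := Y₁.map X₁.mkQ with hM'def
  have e2 : M' ≃ₗ[R] ∀ i, R ⧸ L i := ((subQuotEquiv hYN hXY).symm.trans e0)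
  -- b kills M'
  have h2 : b • M' = ⊥ := by
    rw [eq_bot_iff]
    refine Submodule.smul_le.2 fun r hr x hx => ?_
    rw [Submodule.mem_bot]
    have hy : r • e2 ⟨x, hx⟩ ∈ b • (⊤ : Submodule R (∀ i, R ⧸ L i)) :=
      Submodule.smul_mem_smul hr trivial
    rw [smulTop_pi_quot_eq_bot L hbL, Submodule.mem_bot] at hy
    have h0 : r • (⟨x, hx⟩ : M') = 0 := by
      apply e2.injective
      rw [map_smul, hy, map_zero]
    have := congrArg Subtype.val h0
    simpa using this
  -- a • ⊤ ≤ M'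
  have hq : ((N ⧸ X₁) ⧸ M') ≃ₗ[R] ∀ i, R ⧸ K i :=
    (Submodule.quotientQuotientEquivQuotient X₁ Y₁ hXY₁).trans e1
  have hbot : a • (⊤ : Submodule R ((N ⧸ X₁) ⧸ M')) = ⊥ :=
    smulTop_eq_bot_of_equiv hq (smulTop_pi_quot_eq_bot K haK)
  have h1 : a • (⊤ : Submodule R (N ⧸ X₁)) ≤ M' := by
    have h : (a • (⊤ : Submodule R (N ⧸ X₁))).map M'.mkQ ≤ ⊥ := by
      rw [Submodule.map_smul'', Submodule.map_top, Submodule.range_mkQ, hbot]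
    have h' := Submodule.map_le_iff_le_comap.1 h
    rwa [Submodule.comap_bot, Submodule.ker_mkQ] at h'
  have hMa : M' = a • (⊤ : Submodule R (N ⧸ X₁)) := core_eq hab h1 h2
  -- uniqueness of Y
  have hY : Y = X ⊔ a • N := by
    have step1 : Y₁ = X₁ ⊔ a • (⊤ : Submodule R N) := by
      calc Y₁ = (Y₁.map X₁.mkQ).comap X₁.mkQ := by
            rw [Submodule.comap_map_eq, Submodule.ker_mkQ, sup_eq_left.2 hXY₁]
        _ = ((a • (⊤ : Submodule R N)).map X₁.mkQ).comap X₁.mkQ := by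
            rw [← hM'def, hMa, Submodule.map_smul'', Submodule.map_top, Submodule.range_mkQ]
        _ = a • (⊤ : Submodule R N) ⊔ X₁ := by
            rw [Submodule.comap_map_eq, Submodule.ker_mkQ]
        _ = X₁ ⊔ a • (⊤ : Submodule R N) := sup_comm _ _
    have := congrArg (Submodule.map N.subtype) step1
    rwa [Submodule.map_comap_subtype, inf_eq_right.2 hYN, Submodule.map_sup,
      Submodule.map_comap_subtype, inf_eq_right.2 hXN, Submodule.map_smul'',
      Submodule.map_top, Submodule.range_subtype] at this
  -- the CRT decomposition of N ⧸ X₁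
  have hannM : (a * b) • (⊤ : Submodule R (N ⧸ X₁)) = ⊥ := by
    rw [eq_bot_iff]
    calc (a * b) • (⊤ : Submodule R (N ⧸ X₁)) = b • (a • ⊤) := by
          rw [mul_comm, ← Ideal.smul_eq_mul, Submodule.smul_assoc]
      _ ≤ b • M' := Submodule.smul_mono le_rfl h1
      _ = ⊥ := h2
  have main : (N ⧸ X₁) ≃ₗ[R] (∀ i, R ⧸ K i) × (∀ i, R ⧸ L i) :=
    (coreProd hα hβ hαβ hannM).trans
      (LinearEquiv.prodCongr
        ((Submodule.quotEquivOfEq _ _ hMa.symm).trans hq)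
        ((coreSub hα hβ hαβ h1 h2).symm.trans e2))
  have hP : (∀ i, R ⧸ (K i * L i)) ≃ₗ[R] (∀ i, R ⧸ K i) × (∀ i, R ⧸ L i) :=
    (coreProd hα hβ hαβ (hannP haK hbL)).trans
      (LinearEquiv.prodCongr (quotSmulTopPEquivLeft haK hbL hab)
        (quotSmulTopPEquivRight haK hbL hab))
  exact ⟨hY, ⟨main.trans hP.symm⟩⟩

end Hecke

section Finiteness

variable {V : Type*} [AddCommGroup V] [Module R V]

theorem finite_inter (A : Submodule R V) (c : Ideal R)
    (hfin : Finite (A ⧸ c • (⊤ : Submodule R A))) :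
    Finite {X : Submodule R V // X ≤ A ∧ c • (⊤ : Submodule R A) ≤ X.comap A.subtype} := by
  have hsub : Finite (Submodule R (A ⧸ c • (⊤ : Submodule R A))) :=
    Finite.of_injective (β := Set (A ⧸ c • (⊤ : Submodule R A))) (fun S : Submodule R (A ⧸ c • (⊤ : Submodule R A)) => (S : Set _)) SetLike.coe_injective
  apply Finite.of_injective
    (fun X : {X : Submodule R V // X ≤ A ∧ c • (⊤ : Submodule R A) ≤ X.comap A.subtype} =>
      (X.1.comap A.subtype).map (c • (⊤ : Submodule R A)).mkQ)
  rintro ⟨X, hXA, hX⟩ ⟨Y, hYA, hY⟩ h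
  simp only at h
  apply Subtype.ext
  have recover : ∀ (Z : Submodule R V), c • (⊤ : Submodule R A) ≤ Z.comap A.subtype →
      ((Z.comap A.subtype).map (c • (⊤ : Submodule R A)).mkQ).comap
        (c • (⊤ : Submodule R A)).mkQ = Z.comap A.subtype := by
    intro Z hZ
    rw [Submodule.comap_map_eq, Submodule.ker_mkQ, sup_eq_left.2 hZ]
  have h' := congrArg (Submodule.comap (c • (⊤ : Submodule R A)).mkQ) h
  rw [recover X hX, recover Y hY] at h'
  have h'' := congrArg (Submodule.map A.subtype) h'
  rwa [Submodule.map_comap_subtype, Submodule.map_comap_subtype,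
    inf_eq_right.2 hXA, inf_eq_right.2 hYA] at h''

theorem prod_ne_bot_of_ne_bot [IsDomain R] {ι : Type*} (s : Finset ι) (f : ι → Ideal R)
    (h : ∀ i ∈ s, f i ≠ ⊥) : ∏ i ∈ s, f i ≠ ⊥ := by
  classical
  induction s using Finset.induction_on with
  | empty =>
    rw [Finset.prod_empty, Ideal.one_eq_top]
    exact top_ne_bot
  | @insert i s' hx ih =>
    rw [Finset.prod_insert hx]
    intro hbot
    rcases Ideal.mul_eq_bot.1 hbot with h1 | h2
    · exact h i (Finset.mem_insert_self i s') h1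
    · exact (ih fun j hj => h j (Finset.mem_insert_of_mem hj)) h2

end Finiteness

end Aux

section PolyFinite

variable {Fq : Type} [Field Fq] [Fintype Fq]

theorem finite_quot_poly (c : Ideal (Polynomial Fq)) (hc : c ≠ ⊥) :
    Finite (Polynomial Fq ⧸ c) := by
  obtain ⟨g, hg⟩ := (IsPrincipalIdealRing.principal c).principal
  have hg0 : g ≠ 0 := by
    rintro rfl
    rw [hg] at hc
    simp at hc
  rw [hg]
  have : Module.Finite Fq (AdjoinRoot g) := (AdjoinRoot.powerBasis hg0).finite
  exact Module.finite_of_finite Fq (M := AdjoinRoot g)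

theorem finite_quot_smulTop {M : Type*} [AddCommGroup M] [Module (Polynomial Fq) M]
    [Module.Finite (Polynomial Fq) M] {c : Ideal (Polynomial Fq)} (hc : c ≠ ⊥) :
    Finite (M ⧸ c • (⊤ : Submodule (Polynomial Fq) M)) := by
  have h1 : Finite (Polynomial Fq ⧸ c) := finite_quot_poly c hc
  have h2 : Module.Finite (Polynomial Fq)
      (M ⧸ c • (⊤ : Submodule (Polynomial Fq) M)) := Module.Finite.quotient _ _
  have h3 : Module.Finite (Polynomial Fq ⧸ c)
      (M ⧸ c • (⊤ : Submodule (Polynomial Fq) M)) :=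
    Module.Finite.of_restrictScalars_finite (Polynomial Fq) _ _
  exact Module.finite_of_finite (Polynomial Fq ⧸ c)

end PolyFinite

set_option maxHeartbeats 1000000 in
/-- Multiplicativity of Hecke operators for coprime levels: if `J₁ ⊇ ... ⊇ Jₙ` and
`J̄₁ ⊇ ... ⊇ J̄ₙ` are chains of nonzero ideals of `F_q[t]` with coprime products, then
for a lattice `N ⊆ F_q(t)^{⊕n}`, the number of sublattices `N'' ⊆ N` with
`N/N'' ≅ ⊕ᵢ F_q[t]/(Jᵢ J̄ᵢ)` equals the sum, over sublattices `N' ⊆ N` with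
`N/N' ≅ ⊕ᵢ F_q[t]/Jᵢ`, of the number of sublattices `N'' ⊆ N'` with
`N'/N'' ≅ ⊕ᵢ F_q[t]/J̄ᵢ`; i.e. `T(J₁,...,Jₙ) · T(J̄₁,...,J̄ₙ) = T(J₁J̄₁,...,JₙJ̄ₙ)`. -/
theorem hecke_multiplicativity_coprime
    (Fq : Type) [Field Fq] [Fintype Fq] (n : ℕ)
    (J Jb : Fin n → Ideal (Polynomial Fq))
    (hJchain : ∀ i j : Fin n, i ≤ j → J j ≤ J i)
    (hJbchain : ∀ i j : Fin n, i ≤ j → Jb j ≤ Jb i)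
    (hJne : ∀ i, J i ≠ ⊥) (hJbne : ∀ i, Jb i ≠ ⊥)
    (hcop : (∏ i, J i) ⊔ (∏ i, Jb i) = ⊤)
    (N : Submodule (Polynomial Fq) (Fin n → RatFunc Fq))
    (hfg : Module.Finite (Polynomial Fq) N)
    (hfull : Submodule.span (RatFunc Fq) (N : Set (Fin n → RatFunc Fq)) = ⊤) :
    Nat.card {N'' : Submodule (Polynomial Fq) (Fin n → RatFunc Fq) //
        N'' ≤ N ∧ Nonempty ((N ⧸ N''.comap N.subtype) ≃ₗ[Polynomial Fq]
          ((i : Fin n) → Polynomial Fq ⧸ (J i * Jb i)))} =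
      ∑ᶠ N' : {N' : Submodule (Polynomial Fq) (Fin n → RatFunc Fq) //
          N' ≤ N ∧ Nonempty ((N ⧸ N'.comap N.subtype) ≃ₗ[Polynomial Fq]
            ((i : Fin n) → Polynomial Fq ⧸ J i))},
        Nat.card {N'' : Submodule (Polynomial Fq) (Fin n → RatFunc Fq) //
          N'' ≤ N'.1 ∧ Nonempty ((N'.1 ⧸ N''.comap N'.1.subtype) ≃ₗ[Polynomial Fq]
            ((i : Fin n) → Polynomial Fq ⧸ Jb i))} := by
  classical
  haveI : Module.Finite (Polynomial Fq) N := hfg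
  set a : Ideal (Polynomial Fq) := ∏ i, J i with ha
  set b : Ideal (Polynomial Fq) := ∏ i, Jb i with hb
  have haK : ∀ i, a ≤ J i := fun i =>
    Ideal.prod_le_inf.trans (Finset.inf_le (Finset.mem_univ i))
  have hbL : ∀ i, b ≤ Jb i := fun i =>
    Ideal.prod_le_inf.trans (Finset.inf_le (Finset.mem_univ i))
  have hane : a ≠ ⊥ := prod_ne_bot_of_ne_bot _ _ fun i _ => hJne i
  have hbne : b ≠ ⊥ := prod_ne_bot_of_ne_bot _ _ fun i _ => hJbne i
  have habne : a * b ≠ ⊥ := by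
    intro hbot
    rcases Ideal.mul_eq_bot.1 hbot with h | h
    · exact hane h
    · exact hbne h
  -- the types involved
  let S1 := {N'' : Submodule (Polynomial Fq) (Fin n → RatFunc Fq) //
      N'' ≤ N ∧ Nonempty ((N ⧸ N''.comap N.subtype) ≃ₗ[Polynomial Fq]
        ((i : Fin n) → Polynomial Fq ⧸ (J i * Jb i)))}
  let S2 := {N' : Submodule (Polynomial Fq) (Fin n → RatFunc Fq) //
      N' ≤ N ∧ Nonempty ((N ⧸ N'.comap N.subtype) ≃ₗ[Polynomial Fq]
        ((i : Fin n) → Polynomial Fq ⧸ J i))}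
  let F : S2 → Type := fun N' => {N'' : Submodule (Polynomial Fq) (Fin n → RatFunc Fq) //
      N'' ≤ N'.1 ∧ Nonempty ((N'.1 ⧸ N''.comap N'.1.subtype) ≃ₗ[Polynomial Fq]
        ((i : Fin n) → Polynomial Fq ⧸ Jb i))}
  -- the bijection
  let E : S1 ≃ (Σ N' : S2, F N') :=
    { toFun := fun X =>
        ⟨⟨X.1 ⊔ a • N, (hecke_fwd haK hbL hcop X.2.1 X.2.2).1,
            (hecke_fwd haK hbL hcop X.2.1 X.2.2).2.1⟩,
          ⟨X.1, le_sup_left, (hecke_fwd haK hbL hcop X.2.1 X.2.2).2.2⟩⟩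
      invFun := fun p =>
        ⟨p.2.1, (p.2.2.1.trans p.1.2.1),
          (hecke_bwd haK hbL hcop p.1.2.1 p.2.2.1 p.1.2.2 p.2.2.2).2⟩
      left_inv := fun X => Subtype.ext rfl
      right_inv := fun p => by
        obtain ⟨⟨Y, hY1, hY2⟩, ⟨X, hX1, hX2⟩⟩ := p
        have key : Y = X ⊔ a • N :=
          (hecke_bwd haK hbL hcop hY1 hX1 hY2 hX2).1
        subst key
        rfl }
  -- finiteness
  have hfinS2 : Finite S2 := by
    have hfin : Finite (N ⧸ a • (⊤ : Submodule (Polynomial Fq) N)) := finite_quot_smulTop hane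
    have h := finite_inter N a hfin
    apply Finite.of_injective (β := {X : Submodule (Polynomial Fq) (Fin n → RatFunc Fq) //
        X ≤ N ∧ a • (⊤ : Submodule (Polynomial Fq) N) ≤ X.comap N.subtype})
      (fun X => ⟨X.1, X.2.1,
        smulTop_le_of_quot_equiv X.2.2.some (smulTop_pi_quot_eq_bot J haK)⟩)
    intro x y hxy
    have hval := congrArg Subtype.val hxy
    exact Subtype.ext hval
  haveI := hfinS2
  haveI : Fintype S2 := Fintype.ofFinite S2
  have hfinF : ∀ N' : S2, Finite (F N') := by
    intro N'
    haveI : Module.Finite (Polynomial Fq) N'.1 := by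
      have h1 : Module.Finite (Polynomial Fq) (N'.1.comap N.subtype) :=
        Module.Finite.iff_fg.2 (IsNoetherian.noetherian _)
      exact Module.Finite.equiv (Submodule.comapSubtypeEquivOfLe N'.2.1)
    have hfin : Finite (N'.1 ⧸ b • (⊤ : Submodule (Polynomial Fq) N'.1)) := finite_quot_smulTop hbne
    have h := finite_inter N'.1 b hfin
    apply Finite.of_injective (β := {X : Submodule (Polynomial Fq) (Fin n → RatFunc Fq) //
        X ≤ N'.1 ∧ b • (⊤ : Submodule (Polynomial Fq) N'.1) ≤ X.comap N'.1.subtype})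
      (fun X => ⟨X.1, X.2.1,
        smulTop_le_of_quot_equiv X.2.2.some (smulTop_pi_quot_eq_bot Jb hbL)⟩)
    intro x y hxy
    have hval := congrArg Subtype.val hxy
    exact Subtype.ext hval
  haveI := hfinF
  haveI : ∀ N' : S2, Fintype (F N') := fun N' => Fintype.ofFinite (F N')
  calc Nat.card S1 = Nat.card (Σ N' : S2, F N') := Nat.card_congr E
    _ = ∑ N' : S2, Nat.card (F N') := by
        rw [Nat.card_eq_fintype_card, Fintype.card_sigma]
        exact Finset.sum_congr rfl fun i _ => (Nat.card_eq_fintype_card).symm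
    _ = ∑ᶠ N' : S2, Nat.card (F N') := (finsum_eq_sum_of_fintype _).symm
end
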